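/- Under the reset property, the conditional distribution of the sojourn time T_{n+1} − T_n given S_n = (past jump times and states) is inhomogeneous phase-type with initial distribution π_{Y_n}(T_n) and sub-intensity matrix function s ↦ M_{Y_n Y_n}(T_n + s); that is, P(T_{n+1} − T_n > u | S_n = s_n) = π_{y_n}(t_n) P̄_{y_n}(t_n, t_n + u) 1_{d_{y_n}}, independent of the past jump times and transitions except through (t_n, y_n). -/
import Mathlib


open Matrix

/-- The defective density row vector `α(s_n)` of the macro jump data. -/
noncomputable def alphaVec (J : ℕ) (d : Fin J → ℕ) (y : ℕ → Fin J) (t : ℕ → ℝ)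
    (Pbar : ∀ i : Fin J, ℝ → ℝ → Matrix (Fin (d i)) (Fin (d i)) ℝ)
    (M : ∀ i j : Fin J, ℝ → Matrix (Fin (d i)) (Fin (d j)) ℝ)
    (π1 : Fin (d (y 0)) → ℝ) : (n : ℕ) → Fin (d (y n)) → ℝ
  | 0 => π1
  | n + 1 =>
      (alphaVec J d y t Pbar M π1 n) ᵥ*
        (Pbar (y n) (t n) (t (n + 1)) * M (y n) (y (n + 1)) (t (n + 1)))

/-- Under the reset property, the conditional survival function of the sojourn time
`T_{n+1} − T_n` given the macro history `s_n`, which in general equals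
`α(s_n) P̄_{y_n}(t_n, t_n+u) 1 / (α(s_n)1)`, equals `π_{y_n}(t_n) P̄_{y_n}(t_n, t_n+u) 1`:
it is inhomogeneous phase-type with initial vector `π_{y_n}(t_n)` and sub-intensity
`M_{y_n y_n}(t_n + ·)`, depending on the past only through `(t_n, y_n)`. -/
theorem sojourn_iph_reset (J : ℕ) (d : Fin J → ℕ) (y : ℕ → Fin J) (t : ℕ → ℝ)
    (Pbar : ∀ i : Fin J, ℝ → ℝ → Matrix (Fin (d i)) (Fin (d i)) ℝ)
    (M : ∀ i j : Fin J, ℝ → Matrix (Fin (d i)) (Fin (d j)) ℝ)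
    (β : ∀ i j : Fin J, ℝ → Fin (d i) → ℝ)
    (πv : ∀ j : Fin J, ℝ → Fin (d j) → ℝ)
    (hβ : ∀ i j x a, 0 ≤ β i j x a)
    (hπ0 : ∀ j x b, 0 ≤ πv j x b)
    (hπ1 : ∀ j x, ∑ b, πv j x b = 1)
    (hreset : ∀ i j, i ≠ j → ∀ x, M i j x = vecMulVec (β i j x) (πv j x))
    (hjump : ∀ ℓ : ℕ, y ℓ ≠ y (ℓ + 1))
    (π1 : Fin (d (y 0)) → ℝ) (hinit : π1 = πv (y 0) (t 0)) (n : ℕ)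
    (hmass : 0 < ∑ b, alphaVec J d y t Pbar M π1 n b) :
    ∀ u : ℝ, 0 ≤ u →
      (∑ b, (alphaVec J d y t Pbar M π1 n ᵥ* Pbar (y n) (t n) (t n + u)) b) /
          (∑ b, alphaVec J d y t Pbar M π1 n b) =
        ∑ b, (πv (y n) (t n) ᵥ* Pbar (y n) (t n) (t n + u)) b := by
  -- α_n is a scalar multiple of πv (y n) (t n)
  have key : ∀ n : ℕ, ∃ c : ℝ, alphaVec J d y t Pbar M π1 n = c • πv (y n) (t n) := by
    intro n
    induction n with
    | zero => exact ⟨1, by simpa [alphaVec] using hinit⟩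
    | succ m ih =>
      obtain ⟨c, hc⟩ := ih
      refine ⟨c * ((πv (y m) (t m) ᵥ* Pbar (y m) (t m) (t (m + 1))) ⬝ᵥ
        β (y m) (y (m + 1)) (t (m + 1))), ?_⟩
      show (alphaVec J d y t Pbar M π1 m) ᵥ*
          (Pbar (y m) (t m) (t (m + 1)) * M (y m) (y (m + 1)) (t (m + 1))) = _
      rw [hc, hreset _ _ (hjump m)]
      funext b
      simp only [Matrix.vecMul, dotProduct, Matrix.mul_apply,
        Matrix.vecMulVec_apply, Pi.smul_apply, smul_eq_mul, Finset.sum_mul,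
        Finset.mul_sum]
      rw [Finset.sum_comm]
      exact Finset.sum_congr rfl fun i _ => Finset.sum_congr rfl fun j _ => by ring
  obtain ⟨c, hc⟩ := key n
  have hsum : ∑ b, alphaVec J d y t Pbar M π1 n b = c := by
    rw [hc]
    simp [← Finset.mul_sum, hπ1]
  have hcpos : 0 < c := hsum ▸ hmass
  intro u _
  rw [hc, Matrix.smul_vecMul]
  simp only [Pi.smul_apply, smul_eq_mul, ← Finset.mul_sum, hπ1, mul_one]
  rw [mul_comm, mul_div_assoc, div_self hcpos.ne', mul_one]
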